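/- For every integer n ≥ 1 and every x > 0, φ_n(x) > φ_{n+1}(x), i.e. the sequence n ↦ φ_n(x) is strictly decreasing. -/

import Mathlib

open Real

/-- The universal function `φ_n`. -/
noncomputable def phi (n : ℕ) (x : ℝ) : ℝ :=
  ∫ η in (0:ℝ)..π, Real.exp (-2 * x * Real.sin η) * Real.cos (2 * n * η)

open Real MeasureTheory Filter Topology Metric Set intervalIntegral

noncomputable def P (g : ℝ → ℝ) (x : ℝ) : ℝ :=
  ∫ η in (0:ℝ)..π, Real.exp (-2 * x * Real.sin η) * g η


lemma abs_sin_le_one' (η : ℝ) : |Real.sin η| ≤ 1 :=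
  abs_le.mpr ⟨Real.neg_one_le_sin η, Real.sin_le_one η⟩

lemma hasDerivAt_P (g : ℝ → ℝ) (hg : Continuous g) (C : ℝ) (hC : ∀ η, |g η| ≤ C) (x : ℝ) :
    HasDerivAt (P g) (P (fun η => -2 * Real.sin η * g η) x) x := by
  have hCnn : 0 ≤ C := le_trans (abs_nonneg _) (hC 0)
  have key := intervalIntegral.hasDerivAt_integral_of_dominated_loc_of_deriv_le
    (F := fun y η => Real.exp (-2 * y * Real.sin η) * g η)
    (F' := fun y η => Real.exp (-2 * y * Real.sin η) * (-2 * Real.sin η * g η))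
    (x₀ := x) (a := (0:ℝ)) (b := π) (μ := volume)
    (bound := fun _ => Real.exp (2 * (|x| + 1)) * (2 * C))
    (s := ball x 1) (ball_mem_nhds x one_pos)
    (by
      filter_upwards with y
      exact (Continuous.aestronglyMeasurable (by fun_prop)).restrict)
    (((by fun_prop : Continuous fun η => Real.exp (-2 * x * Real.sin η) * g η)).intervalIntegrable 0 π)
    ((Continuous.aestronglyMeasurable (by fun_prop)).restrict)
    (by
      filter_upwards with η _ y hy
      have hy' : |y| ≤ |x| + 1 := by
        have h := mem_ball_iff_norm.mp hy
        rw [Real.norm_eq_abs] at h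
        have : |y| - |x| ≤ |y - x| := abs_sub_abs_le_abs_sub y x
        linarith
      have hs : |Real.sin η| ≤ 1 := abs_sin_le_one' η
      have h1 : Real.exp (-2 * y * Real.sin η) ≤ Real.exp (2 * (|x| + 1)) := by
        apply Real.exp_le_exp.mpr
        calc -2 * y * Real.sin η ≤ |(-2) * y * Real.sin η| := le_abs_self _
          _ = 2 * |y| * |Real.sin η| := by
              rw [abs_mul, abs_mul]; norm_num
          _ ≤ 2 * (|x| + 1) * 1 := by
              have h0 : (0:ℝ) ≤ 2 * |y| := by positivity
              nlinarith [abs_nonneg y, abs_nonneg (Real.sin η)]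
          _ = 2 * (|x| + 1) := by ring
      have h2 : |(-2 * Real.sin η * g η)| ≤ 2 * C := by
        calc |(-2 * Real.sin η * g η)| = 2 * |Real.sin η| * |g η| := by
              rw [abs_mul, abs_mul]; norm_num
          _ ≤ 2 * 1 * C := by
              nlinarith [abs_nonneg (Real.sin η), abs_nonneg (g η), hC η]
          _ = 2 * C := by ring
      rw [Real.norm_eq_abs, abs_mul, Real.abs_exp]
      exact mul_le_mul h1 h2 (abs_nonneg _) (Real.exp_nonneg _))
    (intervalIntegrable_const)
    (by
      filter_upwards with η _ y hy
      have hinner : HasDerivAt (fun y : ℝ => -2 * y * Real.sin η) (-2 * Real.sin η) y := by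
        simpa using ((hasDerivAt_id y).const_mul (-2 : ℝ)).mul_const (Real.sin η)
      have := hinner.exp.mul_const (g η)
      convert this using 1
      rfl
      ring)
  have h2 := key.2
  have heq : (∫ η in (0:ℝ)..π, Real.exp (-2 * x * Real.sin η) * (-2 * Real.sin η * g η))
      = P (fun η => -2 * Real.sin η * g η) x := by
    unfold P
    apply intervalIntegral.integral_congr
    intro η _
    ring
  rw [heq] at h2
  exact h2


noncomputable def Aint (m : ℕ) (x : ℝ) : ℝ :=
  ∫ η in (0:ℝ)..π, Real.exp (-2*x*Real.sin η) * Real.cos (2*(m:ℝ)*η)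
noncomputable def Bint (m : ℕ) (x : ℝ) : ℝ :=
  ∫ η in (0:ℝ)..π, Real.sin η * (Real.exp (-2*x*Real.sin η) * Real.cos (2*(m:ℝ)*η))
noncomputable def Dint (m : ℕ) (x : ℝ) : ℝ :=
  ∫ η in (0:ℝ)..π, Real.sin η * (Real.sin η * (Real.exp (-2*x*Real.sin η) * Real.cos (2*(m:ℝ)*η)))
noncomputable def Sint (m : ℕ) (x : ℝ) : ℝ :=
  ∫ η in (0:ℝ)..π, Real.cos η * (Real.exp (-2*x*Real.sin η) * Real.sin (2*(m:ℝ)*η))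
noncomputable def Cint (m : ℕ) (x : ℝ) : ℝ :=
  ∫ η in (0:ℝ)..π, Real.cos η * (Real.cos η * (Real.exp (-2*x*Real.sin η) * Real.cos (2*(m:ℝ)*η)))

lemma hP0 (m : ℕ) (x : ℝ) : P (fun η => Real.cos (2*(m:ℝ)*η)) x = Aint m x := rfl

lemma hP1 (m : ℕ) (x : ℝ) :
    P (fun η => -2 * Real.sin η * Real.cos (2*(m:ℝ)*η)) x = -2 * Bint m x := by
  unfold P Bint
  rw [← intervalIntegral.integral_const_mul]
  apply intervalIntegral.integral_congr
  intro η _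
  ring

lemma hP2 (m : ℕ) (x : ℝ) :
    P (fun η => -2 * Real.sin η * (-2 * Real.sin η * Real.cos (2*(m:ℝ)*η))) x = 4 * Dint m x := by
  unfold P Dint
  rw [← intervalIntegral.integral_const_mul]
  apply intervalIntegral.integral_congr
  intro η _
  ring

lemma hPyth (m : ℕ) (x : ℝ) : Cint m x + Dint m x = Aint m x := by
  unfold Cint Dint Aint
  rw [← intervalIntegral.integral_add
    ((by fun_prop : Continuous fun η : ℝ =>
      Real.cos η * (Real.cos η * (Real.exp (-2*x*Real.sin η) * Real.cos (2*(m:ℝ)*η)))).intervalIntegrable 0 π)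
    ((by fun_prop : Continuous fun η : ℝ =>
      Real.sin η * (Real.sin η * (Real.exp (-2*x*Real.sin η) * Real.cos (2*(m:ℝ)*η)))).intervalIntegrable 0 π)]
  apply intervalIntegral.integral_congr
  intro η _
  have h := Real.sin_sq_add_cos_sq η
  linear_combination (Real.exp (-2*x*Real.sin η) * Real.cos (2*(m:ℝ)*η)) * h

lemma hlin' (m : ℕ) (η : ℝ) : HasDerivAt (fun η : ℝ => 2 * (m:ℝ) * η) (2*(m:ℝ)) η := by
  simpa using (hasDerivAt_id η).const_mul (2*(m:ℝ))

lemma hE' (x η : ℝ) : HasDerivAt (fun η : ℝ => Real.exp (-2 * x * Real.sin η))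
    (Real.exp (-2 * x * Real.sin η) * (-2 * x * Real.cos η)) η := by
  have hinner : HasDerivAt (fun η : ℝ => -2 * x * Real.sin η) (-2 * x * Real.cos η) η := by
    simpa using (Real.hasDerivAt_sin η).const_mul (-2*x)
  exact hinner.exp

lemma hsin2m' (m : ℕ) (η : ℝ) : HasDerivAt (fun η : ℝ => Real.sin (2 * (m:ℝ) * η))
    (Real.cos (2 * (m:ℝ) * η) * (2*(m:ℝ))) η :=
  (Real.hasDerivAt_sin (2*(m:ℝ)*η)).comp η (hlin' m η)

lemma hcos2m' (m : ℕ) (η : ℝ) : HasDerivAt (fun η : ℝ => Real.cos (2 * (m:ℝ) * η))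
    (-Real.sin (2 * (m:ℝ) * η) * (2*(m:ℝ))) η :=
  (Real.hasDerivAt_cos (2*(m:ℝ)*η)).comp η (hlin' m η)

lemma hsinpi' (m : ℕ) : Real.sin (2 * (m:ℝ) * π) = 0 := by
  have h := Real.sin_nat_mul_pi (2*m)
  push_cast at h
  linarith [h]

lemma hcospi' (m : ℕ) : Real.cos (2 * (m:ℝ) * π) = 1 := by
  rw [show (2:ℝ) * (m:ℝ) * π = (m:ℝ) * (2*π) by ring]
  exact Real.cos_nat_mul_two_pi m

lemma hI1 (m : ℕ) (x : ℝ) : -2*x*Sint m x + 2*(m:ℝ)*Aint m x = 0 := by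
  have hftc : (∫ η in (0:ℝ)..π,
      (-2*x * (Real.cos η * (Real.exp (-2*x*Real.sin η) * Real.sin (2*(m:ℝ)*η)))
        + 2*(m:ℝ) * (Real.exp (-2*x*Real.sin η) * Real.cos (2*(m:ℝ)*η)))) = 0 := by
    rw [intervalIntegral.integral_eq_sub_of_hasDerivAt
      (f := fun η => Real.exp (-2*x*Real.sin η) * Real.sin (2*(m:ℝ)*η))
      (fun η _ => by
        have h := (hE' x η).mul (hsin2m' m η)
        convert h using 1
        rfl
        rfl
        ring)
      ((by fun_prop : Continuous fun η : ℝ =>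
        (-2*x * (Real.cos η * (Real.exp (-2*x*Real.sin η) * Real.sin (2*(m:ℝ)*η)))
          + 2*(m:ℝ) * (Real.exp (-2*x*Real.sin η) * Real.cos (2*(m:ℝ)*η)))).intervalIntegrable 0 π)]
    simp [hsinpi' m]
  rw [intervalIntegral.integral_add
      ((by fun_prop : Continuous fun η : ℝ =>
        -2*x * (Real.cos η * (Real.exp (-2*x*Real.sin η) * Real.sin (2*(m:ℝ)*η)))).intervalIntegrable 0 π)
      ((by fun_prop : Continuous fun η : ℝ =>
        2*(m:ℝ) * (Real.exp (-2*x*Real.sin η) * Real.cos (2*(m:ℝ)*η))).intervalIntegrable 0 π),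
    intervalIntegral.integral_const_mul, intervalIntegral.integral_const_mul] at hftc
  unfold Sint Aint
  exact hftc

lemma hI2 (m : ℕ) (x : ℝ) :
    -2*x*Cint m x + (-1 * Bint m x + -2*(m:ℝ) * Sint m x) = -2 := by
  have hftc : (∫ η in (0:ℝ)..π,
      (-2*x * (Real.cos η * (Real.cos η * (Real.exp (-2*x*Real.sin η) * Real.cos (2*(m:ℝ)*η))))
        + (-1 * (Real.sin η * (Real.exp (-2*x*Real.sin η) * Real.cos (2*(m:ℝ)*η)))
          + -2*(m:ℝ) * (Real.cos η * (Real.exp (-2*x*Real.sin η) * Real.sin (2*(m:ℝ)*η)))))) = -2 := by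
    rw [intervalIntegral.integral_eq_sub_of_hasDerivAt
      (f := fun η => Real.exp (-2*x*Real.sin η) * (Real.cos η * Real.cos (2*(m:ℝ)*η)))
      (fun η _ => by
        have h := (hE' x η).mul ((Real.hasDerivAt_cos η).mul (hcos2m' m η))
        convert h using 1
        rfl
        rfl
        simp only [Pi.mul_apply]
        ring)
      ((by fun_prop : Continuous fun η : ℝ =>
        (-2*x * (Real.cos η * (Real.cos η * (Real.exp (-2*x*Real.sin η) * Real.cos (2*(m:ℝ)*η))))
          + (-1 * (Real.sin η * (Real.exp (-2*x*Real.sin η) * Real.cos (2*(m:ℝ)*η)))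
            + -2*(m:ℝ) * (Real.cos η * (Real.exp (-2*x*Real.sin η) * Real.sin (2*(m:ℝ)*η)))))).intervalIntegrable 0 π)]
    simp [hcospi' m]
    norm_num
  rw [intervalIntegral.integral_add
      ((by fun_prop : Continuous fun η : ℝ =>
        -2*x * (Real.cos η * (Real.cos η * (Real.exp (-2*x*Real.sin η) * Real.cos (2*(m:ℝ)*η))))).intervalIntegrable 0 π)
      (((by fun_prop : Continuous fun η : ℝ =>
        -1 * (Real.sin η * (Real.exp (-2*x*Real.sin η) * Real.cos (2*(m:ℝ)*η)))).intervalIntegrable 0 π).add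
       ((by fun_prop : Continuous fun η : ℝ =>
        -2*(m:ℝ) * (Real.cos η * (Real.exp (-2*x*Real.sin η) * Real.sin (2*(m:ℝ)*η)))).intervalIntegrable 0 π)),
    intervalIntegral.integral_add
      ((by fun_prop : Continuous fun η : ℝ =>
        -1 * (Real.sin η * (Real.exp (-2*x*Real.sin η) * Real.cos (2*(m:ℝ)*η)))).intervalIntegrable 0 π)
      ((by fun_prop : Continuous fun η : ℝ =>
        -2*(m:ℝ) * (Real.cos η * (Real.exp (-2*x*Real.sin η) * Real.sin (2*(m:ℝ)*η)))).intervalIntegrable 0 π),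
    intervalIntegral.integral_const_mul, intervalIntegral.integral_const_mul,
    intervalIntegral.integral_const_mul] at hftc
  unfold Cint Bint Sint
  exact hftc

lemma ode_P (m : ℕ) (x : ℝ) :
    x^2 * P (fun η => -2 * Real.sin η * (-2 * Real.sin η * Real.cos (2 * (m:ℝ) * η))) x
      + x * P (fun η => -2 * Real.sin η * Real.cos (2 * (m:ℝ) * η)) x
      - (4*x^2 + 4*(m:ℝ)^2) * P (fun η => Real.cos (2 * (m:ℝ) * η)) x = -4*x := by
  have h0 := hP0 m x
  have h1 := hP1 m x
  have h2 := hP2 m x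
  have hp := hPyth m x
  have hi1 := hI1 m x
  have hi2 := hI2 m x
  linear_combination (x^2) * h2 + x * h1 - (4*x^2 + 4*(m:ℝ)^2) * h0
    + (2*x) * hi2 + (-2*(m:ℝ)) * hi1 + (4*x^2) * hp


lemma tendsto_P (g : ℝ → ℝ) (hg : Continuous g) (C : ℝ) (hC : ∀ η, |g η| ≤ C) :
    Tendsto (P g) atTop (𝓝 0) := by
  have hrw : P g = fun x => ∫ η in Set.Ioc (0:ℝ) π, Real.exp (-2*x*Real.sin η) * g η := by
    funext x
    unfold P
    rw [intervalIntegral.integral_of_le Real.pi_pos.le]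
  have key := MeasureTheory.tendsto_integral_filter_of_dominated_convergence
    (μ := volume.restrict (Set.Ioc (0:ℝ) π))
    (F := fun (x:ℝ) η => Real.exp (-2*x*Real.sin η) * g η) (f := fun _ => (0:ℝ))
    (bound := fun _ => C) (l := atTop) ?_ ?_ ?_ ?_
  · rw [hrw]
    simpa using key
  · filter_upwards with x
    exact (Continuous.aestronglyMeasurable (by fun_prop)).restrict
  · filter_upwards [eventually_ge_atTop (0:ℝ)] with x hx
    filter_upwards [ae_restrict_mem measurableSet_Ioc] with η hη
    have hs : 0 ≤ Real.sin η := Real.sin_nonneg_of_nonneg_of_le_pi hη.1.le hη.2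
    have h1 : Real.exp (-2*x*Real.sin η) ≤ 1 := by
      rw [show (1:ℝ) = Real.exp 0 by simp]
      apply Real.exp_le_exp.mpr
      nlinarith
    rw [Real.norm_eq_abs, abs_mul, Real.abs_exp]
    calc Real.exp (-2*x*Real.sin η) * |g η| ≤ 1 * C :=
      mul_le_mul h1 (hC η) (abs_nonneg _) zero_le_one
    _ = C := one_mul C
  · exact MeasureTheory.integrable_const C
  · have hne : ∀ᵐ (η:ℝ) ∂(volume.restrict (Set.Ioc (0:ℝ) π)), η ≠ π := by
      apply ae_restrict_of_ae
      rw [ae_iff]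
      simp
    filter_upwards [ae_restrict_mem measurableSet_Ioc, hne] with η hη hηπ
    have hs : 0 < Real.sin η := Real.sin_pos_of_pos_of_lt_pi hη.1 (lt_of_le_of_ne hη.2 hηπ)
    have hlin : Tendsto (fun x : ℝ => -2*x*Real.sin η) atTop atBot := by
      have : ∀ x : ℝ, -2*x*Real.sin η = (-2*Real.sin η)*x := by intro x; ring
      rw [funext this]
      exact tendsto_id.const_mul_atTop_of_neg (by nlinarith)
    have := (Real.tendsto_exp_atBot.comp hlin).mul_const (g η)
    simpa using this

lemma secondDeriv_nonneg_of_isLocalMin {f f' f'' : ℝ → ℝ} {a : ℝ}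
    (hf : ∀ y, HasDerivAt f (f' y) y) (hf' : HasDerivAt f' (f'' a) a)
    (hmin : IsLocalMin f a) : 0 ≤ f'' a := by
  by_contra hcon
  push_neg at hcon
  have hfa : f' a = 0 := hmin.hasDerivAt_eq_zero (hf a)
  have hs := hasDerivAt_iff_tendsto_slope.mp hf'
  have hs' : Tendsto (slope f' a) (𝓝[>] a) (𝓝 (f'' a)) :=
    hs.mono_left (nhdsWithin_mono _ (fun x hx => ne_of_gt hx))
  have hev : ∀ᶠ x in 𝓝[>] a, slope f' a x < 0 := hs'.eventually_lt_const hcon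
  have hneg : ∀ᶠ x in 𝓝[>] a, f' x < 0 := by
    filter_upwards [hev, self_mem_nhdsWithin] with x hx hmem
    have hxa : 0 < x - a := sub_pos.mpr hmem
    rw [slope_def_field] at hx
    rw [hfa, sub_zero] at hx
    rcases div_neg_iff.mp hx with ⟨_, h2⟩ | ⟨h1, _⟩
    · linarith
    · exact h1
  obtain ⟨b, hb, hIoc⟩ := mem_nhdsGT_iff_exists_Ioc_subset.mp hneg
  obtain ⟨ε, hε, hball⟩ := Metric.mem_nhds_iff.mp hmin
  set c := min b (a + ε/2) with hc
  have hac : a < c := lt_min hb (by linarith)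
  have hanti : StrictAntiOn f (Set.Icc a c) := by
    apply strictAntiOn_of_deriv_neg (convex_Icc a c)
    · exact fun x _ => (hf x).continuousAt.continuousWithinAt
    · intro x hx
      rw [interior_Icc] at hx
      rw [(hf x).deriv]
      exact hIoc ⟨hx.1, le_trans hx.2.le (min_le_left _ _)⟩
  have h1 : f c < f a := hanti (Set.left_mem_Icc.mpr hac.le) (Set.right_mem_Icc.mpr hac.le) hac
  have h2 : f a ≤ f c := by
    apply hball
    rw [Metric.mem_ball, Real.dist_eq, abs_sub_lt_iff]
    constructor
    · have : c ≤ a + ε/2 := min_le_right _ _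
      linarith
    · linarith
  linarith

lemma maxprin {f f' f'' : ℝ → ℝ} (K : ℝ) (hK : 0 ≤ K)
    (hd1 : ∀ y, HasDerivAt f (f' y) y) (hd2 : ∀ y, HasDerivAt f' (f'' y) y)
    (h0 : f 0 = 0) (hlim : Tendsto f atTop (𝓝 0))
    (hode : ∀ y > 0, y^2 * f'' y + y * f' y - (4*y^2 + K) * f y < 0) :
    ∀ y, 0 < y → 0 < f y := by
  have main : ∀ y, 0 < y → IsLocalMin f y → f y ≤ 0 → False := by
    intro y hy hminy hfy
    have h1 : f' y = 0 := hminy.hasDerivAt_eq_zero (hd1 y)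
    have h2 : 0 ≤ f'' y := secondDeriv_nonneg_of_isLocalMin hd1 (hd2 y) hminy
    have h3 := hode y hy
    have h4 : y * f' y = 0 := by rw [h1]; ring
    have h5 : 0 ≤ y^2 * f'' y := mul_nonneg (sq_nonneg y) h2
    have h6 : 0 ≤ (4*y^2 + K) * (-f y) := mul_nonneg (by positivity) (by linarith)
    nlinarith
  have negcase : ∀ w, 0 < w → ¬ (f w < 0) := by
    intro w hw hfw
    obtain ⟨M, hM⟩ := eventually_atTop.mp (hlim.eventually_const_lt (show f w/2 < 0 by linarith))
    set M' := max M (w+1) with hM'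
    have hwM : w ≤ M' := le_trans (by linarith) (le_max_right _ _)
    have hM'pos : 0 < M' := lt_of_lt_of_le (by linarith) (le_max_right _ _)
    obtain ⟨z, hzmem, hzmin⟩ := (isCompact_Icc (a := (0:ℝ)) (b := M')).exists_isMinOn
      (Set.nonempty_Icc.mpr (by linarith))
      (fun x _ => (hd1 x).continuousAt.continuousWithinAt)
    have hzw : f z ≤ f w := hzmin ⟨hw.le, hwM⟩
    have hz0 : 0 < z := by
      rcases lt_or_eq_of_le hzmem.1 with h | h
      · exact h
      · exfalso
        rw [← h] at hzw
        rw [h0] at hzw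
        linarith
    have hzM : z < M' := by
      rcases lt_or_eq_of_le hzmem.2 with h | h
      · exact h
      · exfalso
        have := hM M' (le_max_left _ _)
        rw [h] at hzw; linarith
    exact main z hz0 (hzmin.isLocalMin (Icc_mem_nhds hz0 hzM)) (by linarith)
  intro y hy
  by_contra hle
  push_neg at hle
  rcases lt_or_eq_of_le hle with h | h
  · exact negcase y hy h
  · have hnonneg : ∀ w, w ∈ Set.Ioi (0:ℝ) → f y ≤ f w := by
      intro w hw
      have := le_of_not_gt (negcase w hw)
      linarith
    have hminy : IsLocalMin f y := by
      filter_upwards [Ioi_mem_nhds hy] with w hw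
      exact hnonneg w hw
    exact main y hy hminy h.le


lemma abs_cos_le_one' (η : ℝ) : |Real.cos η| ≤ 1 :=
  abs_le.mpr ⟨Real.neg_one_le_cos η, Real.cos_le_one η⟩

lemma P_zero (m : ℕ) (hm : 1 ≤ m) : P (fun η => Real.cos (2*(m:ℝ)*η)) 0 = 0 := by
  have hm0 : (2*(m:ℝ)) ≠ 0 := by
    have : (1:ℝ) ≤ (m:ℝ) := by exact_mod_cast hm
    nlinarith
  unfold P
  rw [intervalIntegral.integral_eq_sub_of_hasDerivAt
    (f := fun η => Real.sin (2*(m:ℝ)*η) / (2*(m:ℝ)))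
    (fun η _ => by
      have h := (hsin2m' m η).div_const (2*(m:ℝ))
      convert h using 1
      rfl
      rw [show (-2:ℝ)*0*Real.sin η = 0 by ring, Real.exp_zero, one_mul, mul_div_assoc,
        div_self hm0, mul_one])
    ((by fun_prop : Continuous fun η : ℝ =>
      Real.exp (-2*0*Real.sin η) * Real.cos (2*(m:ℝ)*η)).intervalIntegrable 0 π)]
  simp [hsinpi' m]

lemma P_deriv1 (m : ℕ) (x : ℝ) :
    HasDerivAt (P (fun η => Real.cos (2*(m:ℝ)*η)))
      (P (fun η => -2 * Real.sin η * Real.cos (2*(m:ℝ)*η)) x) x :=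
  hasDerivAt_P _ (by fun_prop) 1 (fun η => abs_cos_le_one' _) x

lemma P_deriv2 (m : ℕ) (x : ℝ) :
    HasDerivAt (P (fun η => -2 * Real.sin η * Real.cos (2*(m:ℝ)*η)))
      (P (fun η => -2 * Real.sin η * (-2 * Real.sin η * Real.cos (2*(m:ℝ)*η))) x) x :=
  hasDerivAt_P _ (by fun_prop) 2 (fun η => by
    calc |(-2 * Real.sin η * Real.cos (2*(m:ℝ)*η))|
        = 2 * |Real.sin η| * |Real.cos (2*(m:ℝ)*η)| := by
          rw [abs_mul, abs_mul]; norm_num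
      _ ≤ 2 := by
          nlinarith [abs_sin_le_one' η, abs_cos_le_one' (2*(m:ℝ)*η),
            abs_nonneg (Real.sin η), abs_nonneg (Real.cos (2*(m:ℝ)*η))]) x

lemma P_pos (m : ℕ) (hm : 1 ≤ m) : ∀ y, 0 < y → 0 < P (fun η => Real.cos (2*(m:ℝ)*η)) y := by
  apply maxprin (K := 4*(m:ℝ)^2)
    (f' := fun y => P (fun η => -2 * Real.sin η * Real.cos (2*(m:ℝ)*η)) y)
    (f'' := fun y => P (fun η => -2 * Real.sin η * (-2 * Real.sin η * Real.cos (2*(m:ℝ)*η))) y)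
  · positivity
  · exact fun y => P_deriv1 m y
  · exact fun y => P_deriv2 m y
  · exact P_zero m hm
  · exact tendsto_P _ (by fun_prop) 1 (fun η => abs_cos_le_one' _)
  · intro y hy
    have h := ode_P m y
    linarith

/-- Strict monotonicity in `n` of `φ_n(x)` for each fixed `x > 0`. -/
theorem stmt_3 (n : ℕ) (hn : 1 ≤ n) (x : ℝ) (hx : 0 < x) :
    phi (n + 1) x < phi n x := by
  have key : ∀ y, 0 < y → 0 < P (fun η => Real.cos (2*(n:ℝ)*η)) y
      - P (fun η => Real.cos (2*((n+1:ℕ):ℝ)*η)) y := by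
    apply maxprin (K := 4*(n:ℝ)^2)
      (f' := fun y => P (fun η => -2 * Real.sin η * Real.cos (2*(n:ℝ)*η)) y
        - P (fun η => -2 * Real.sin η * Real.cos (2*((n+1:ℕ):ℝ)*η)) y)
      (f'' := fun y => P (fun η => -2 * Real.sin η * (-2 * Real.sin η * Real.cos (2*(n:ℝ)*η))) y
        - P (fun η => -2 * Real.sin η * (-2 * Real.sin η * Real.cos (2*((n+1:ℕ):ℝ)*η))) y)
    · positivity
    · exact fun y => (P_deriv1 n y).sub (P_deriv1 (n+1) y)
    · exact fun y => (P_deriv2 n y).sub (P_deriv2 (n+1) y)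
    · rw [P_zero n hn, P_zero (n+1) (by omega)]; ring
    · have h1 := tendsto_P (fun η => Real.cos (2*(n:ℝ)*η)) (by fun_prop) 1
        (fun η => abs_cos_le_one' _)
      have h2 := tendsto_P (fun η => Real.cos (2*((n+1:ℕ):ℝ)*η)) (by fun_prop) 1
        (fun η => abs_cos_le_one' _)
      simpa using h1.sub h2
    · intro y hy
      have o1 := ode_P n y
      have o2 := ode_P (n+1) y
      have hpos := P_pos (n+1) (by omega) y hy
      have hE : y^2 * (P (fun η => -2 * Real.sin η * (-2 * Real.sin η * Real.cos (2*(n:ℝ)*η))) y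
            - P (fun η => -2 * Real.sin η * (-2 * Real.sin η * Real.cos (2*((n+1:ℕ):ℝ)*η))) y)
          + y * (P (fun η => -2 * Real.sin η * Real.cos (2*(n:ℝ)*η)) y
            - P (fun η => -2 * Real.sin η * Real.cos (2*((n+1:ℕ):ℝ)*η)) y)
          - (4*y^2 + 4*(n:ℝ)^2) * (P (fun η => Real.cos (2*(n:ℝ)*η)) y
            - P (fun η => Real.cos (2*((n+1:ℕ):ℝ)*η)) y)
          = (4*(n:ℝ)^2 - 4*((n+1:ℕ):ℝ)^2) * P (fun η => Real.cos (2*((n+1:ℕ):ℝ)*η)) y := by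
        linear_combination o1 - o2
      have hcoef : 4*(n:ℝ)^2 - 4*((n+1:ℕ):ℝ)^2 < 0 := by
        have hc : ((n+1:ℕ):ℝ) = (n:ℝ)+1 := by push_cast; ring
        rw [hc]
        nlinarith [Nat.cast_nonneg (α := ℝ) n]
      calc y^2 * _ + y * _ - (4*y^2 + 4*(n:ℝ)^2) * _
          = (4*(n:ℝ)^2 - 4*((n+1:ℕ):ℝ)^2) * P (fun η => Real.cos (2*((n+1:ℕ):ℝ)*η)) y := hE
        _ < 0 := mul_neg_of_neg_of_pos hcoef hpos
  have h := key x hx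
  have e1 : phi n x = P (fun η => Real.cos (2*(n:ℝ)*η)) x := rfl
  have e2 : phi (n+1) x = P (fun η => Real.cos (2*((n+1:ℕ):ℝ)*η)) x := rfl
  linarith
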